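/- For all real numbers a, b ≥ 1: a·(log a)² + b·(log b)² ≥ (a+b)·(log(a+b))² − 2·[1 + log((a+b)/a)]·a·log(a+b). (Here log denotes the natural logarithm; the paper states this for nonnegative integers a, b with the convention 0·(log 0)² = 0, the cases a = 0 or b = 0 being trivial.) -/

import Mathlib

/-- First numerical inequality of Lemma 3.3: for `a, b ≥ 1`,
`a(log a)² + b(log b)² ≥ (a+b)(log(a+b))² − 2[1 + log((a+b)/a)]·a·log(a+b)`. -/
theorem numerical_inequality_one (a b : ℝ) (ha : 1 ≤ a) (hb : 1 ≤ b) :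
    a * (Real.log a) ^ 2 + b * (Real.log b) ^ 2 ≥
      (a + b) * (Real.log (a + b)) ^ 2 -
        2 * (1 + Real.log ((a + b) / a)) * a * Real.log (a + b) := by
  have ha0 : (0:ℝ) < a := lt_of_lt_of_le one_pos ha
  have hb0 : (0:ℝ) < b := lt_of_lt_of_le one_pos hb
  have hs0 : (0:ℝ) < a + b := by linarith
  set L := Real.log (a + b) with hL
  set A := Real.log a with hA
  set B := Real.log b with hB
  have hdiv : Real.log ((a + b) / a) = L - A := Real.log_div (ne_of_gt hs0) (ne_of_gt ha0)
  rw [hdiv]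
  have hA0 : 0 ≤ A := Real.log_nonneg ha
  have hB0 : 0 ≤ B := Real.log_nonneg hb
  have hAL : A ≤ L := Real.log_le_log ha0 (by linarith)
  have hBL : B ≤ L := Real.log_le_log hb0 (by linarith)
  -- key: b * (L - B) ≤ a, from log((a+b)/b) ≤ (a+b)/b - 1 = a/b
  have hkey : b * (L - B) ≤ a := by
    have h1 : Real.log ((a + b) / b) ≤ (a + b) / b - 1 :=
      Real.log_le_sub_one_of_pos (by positivity)
    have h2 : Real.log ((a + b) / b) = L - B := Real.log_div (ne_of_gt hs0) (ne_of_gt hb0)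
    rw [h2] at h1
    have h3 : b * (L - B) ≤ b * ((a + b) / b - 1) := by
      exact mul_le_mul_of_nonneg_left h1 (le_of_lt hb0)
    have h4 : b * ((a + b) / b - 1) = a := by field_simp; ring
    linarith
  nlinarith [mul_nonneg ha0.le (sq_nonneg (L - A)), mul_nonneg hb0.le (sq_nonneg (L - B)),
    mul_nonneg (sub_nonneg.mpr hkey) (by linarith : (0:ℝ) ≤ L + B),
    mul_nonneg ha0.le (by linarith : (0:ℝ) ≤ L - B)]
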